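/- Let A be an abelian category, and let C be a category with stabilisers (s_i, ι_i)_{i∈I} such that each ι_i admits a left inverse, i.e. a natural transformation π_i : s_i ⇒ id_C with π_i ∘ ι_i = id_{id_C}. Then for every functor T : C → A all four degrees coincide: wdeg(T) = deg(T) = ideg(T) = sdeg(T). -/

import Mathlib

/-!
Statement 1: if each `ιᵢ` admits a left inverse `πᵢ : sᵢ ⟶ 𝟭 C`, then all four degrees coincide.

All four degrees take values in `{-1, 0, 1, …, ∞}`; we encode such a value `d` as the
element `d + 1 : ℕ∞` (so `-1 ↦ 0`, `∞ ↦ ⊤`), which is an order isomorphism onto `ℕ∞`,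
so inequalities and equalities of degrees are faithfully represented.
`xdegLE d T` means "`xdeg T ≤ d - 1`" (i.e. the predicate at level `d : ℕ`).
-/

open CategoryTheory CategoryTheory.Limits

universe v u w z

variable {C : Type u} [Category.{v} C] {A : Type w} [Category.{z} A] [Abelian A]

/-- The natural transformation `T ∗ ι : T ⟶ s ⋙ T` induced by `ι : 𝟭 C ⟶ s`. -/
def stabMap (s : C ⥤ C) (ι : 𝟭 C ⟶ s) (T : C ⥤ A) : T ⟶ s ⋙ T :=
  T.leftUnitor.inv ≫ Functor.whiskerRight ι T

/-- `degLE s ι d T` means `deg T ≤ d - 1`:  `deg T ≤ -1` iff `T = 0`, and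
`deg T ≤ d` iff `T = 0` or all the cokernels of `T ∗ ιᵢ` have degree `≤ d - 1`. -/
def degLE {I : Type*} (s : I → C ⥤ C) (ι : ∀ i, 𝟭 C ⟶ s i) :
    ℕ → (C ⥤ A) → Prop
  | 0, T => IsZero T
  | d + 1, T => IsZero T ∨ ∀ i, degLE s ι d (cokernel (stabMap (s i) (ι i) T))

/-- `idegLE s ι d T` means `ideg T ≤ d - 1`: as for `deg`, but additionally requiring
that each `T ∗ ιᵢ` has vanishing kernel. -/
def idegLE {I : Type*} (s : I → C ⥤ C) (ι : ∀ i, 𝟭 C ⟶ s i) :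
    ℕ → (C ⥤ A) → Prop
  | 0, T => IsZero T
  | d + 1, T => IsZero T ∨ ∀ i,
      IsZero (kernel (stabMap (s i) (ι i) T)) ∧
      idegLE s ι d (cokernel (stabMap (s i) (ι i) T))

/-- `sdegLE s ι d T` means `sdeg T ≤ d - 1`: as for `deg`, but additionally requiring
that each `T ∗ ιᵢ` is a split monomorphism in the functor category. -/
def sdegLE {I : Type*} (s : I → C ⥤ C) (ι : ∀ i, 𝟭 C ⟶ s i) :
    ℕ → (C ⥤ A) → Prop
  | 0, T => IsZero T
  | d + 1, T => IsZero T ∨ ∀ i,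
      IsSplitMono (stabMap (s i) (ι i) T) ∧
      sdegLE s ι d (cokernel (stabMap (s i) (ι i) T))

/-- `κ(T) = T`, where `κ(T) = Σᵢ ker(T ∗ ιᵢ)` as a subobject of `T`: expressed as
"the only subobject of `T` containing all the kernel subobjects is `⊤`", which is
equivalent to the sum (= supremum) of the kernel subobjects being all of `T`. -/
def kappaEqTop {I : Type*} (s : I → C ⥤ C) (ι : ∀ i, 𝟭 C ⟶ s i) (T : C ⥤ A) : Prop :=
  ∀ W : Subobject T, (∀ i, kernelSubobject (stabMap (s i) (ι i) T) ≤ W) → W = ⊤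

/-- `wdegLE s ι d T` means `wdeg T ≤ d - 1`: `wdeg T ≤ -1` iff `κ(T) = T`, and
`wdeg T ≤ d` iff `κ(T) = T` or all the cokernels of `T ∗ ιᵢ` have weak degree `≤ d - 1`. -/
def wdegLE {I : Type*} (s : I → C ⥤ C) (ι : ∀ i, 𝟭 C ⟶ s i) :
    ℕ → (C ⥤ A) → Prop
  | 0, T => kappaEqTop s ι T
  | d + 1, T => kappaEqTop s ι T ∨ ∀ i, wdegLE s ι d (cokernel (stabMap (s i) (ι i) T))

/-- The degree of `T` (shifted by one: the value `deg T + 1 ∈ ℕ∞`). -/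
noncomputable def deg {I : Type*} (s : I → C ⥤ C) (ι : ∀ i, 𝟭 C ⟶ s i) (T : C ⥤ A) : ℕ∞ :=
  sInf {e : ℕ∞ | ∃ d : ℕ, e = (d : ℕ∞) ∧ degLE s ι d T}

/-- The injective degree of `T` (shifted by one). -/
noncomputable def ideg {I : Type*} (s : I → C ⥤ C) (ι : ∀ i, 𝟭 C ⟶ s i) (T : C ⥤ A) : ℕ∞ :=
  sInf {e : ℕ∞ | ∃ d : ℕ, e = (d : ℕ∞) ∧ idegLE s ι d T}

/-- The split degree of `T` (shifted by one). -/
noncomputable def sdeg {I : Type*} (s : I → C ⥤ C) (ι : ∀ i, 𝟭 C ⟶ s i) (T : C ⥤ A) : ℕ∞ :=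
  sInf {e : ℕ∞ | ∃ d : ℕ, e = (d : ℕ∞) ∧ sdegLE s ι d T}

/-- The weak degree of `T` (shifted by one). -/
noncomputable def wdeg {I : Type*} (s : I → C ⥤ C) (ι : ∀ i, 𝟭 C ⟶ s i) (T : C ⥤ A) : ℕ∞ :=
  sInf {e : ℕ∞ | ∃ d : ℕ, e = (d : ℕ∞) ∧ wdegLE s ι d T}

section Aux

variable {I : Type*} (s : I → C ⥤ C) (ι : ∀ i, 𝟭 C ⟶ s i)
  (π : ∀ i, s i ⟶ 𝟭 C) (hπ : ∀ i, ι i ≫ π i = 𝟙 (𝟭 C))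

include hπ

/-- With a retraction `π`, each `stabMap` is a split mono. -/
noncomputable def stabSplitMono (i : I) (T : C ⥤ A) : SplitMono (stabMap (s i) (ι i) T) where
  retraction := Functor.whiskerRight (π i) T ≫ T.leftUnitor.hom
  id := by
    simp only [stabMap, Category.assoc]
    rw [← Category.assoc (Functor.whiskerRight (ι i) T), ← Functor.whiskerRight_comp, hπ i]
    simp

omit [Abelian A] in
theorem stab_isSplitMono (i : I) (T : C ⥤ A) : IsSplitMono (stabMap (s i) (ι i) T) :=
  ⟨⟨stabSplitMono s ι π hπ i T⟩⟩

theorem stab_kernel_isZero (i : I) (T : C ⥤ A) :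
    IsZero (kernel (stabMap (s i) (ι i) T)) := by
  have := stab_isSplitMono s ι π hπ i T
  exact (isZero_zero _).of_iso (kernel.ofMono _)

theorem kappaEqTop_iff (T : C ⥤ A) : kappaEqTop s ι T ↔ IsZero T := by
  constructor
  · intro h
    have hb : (⊥ : Subobject T) = ⊤ := by
      apply h
      intro i
      have hk : IsZero ((kernelSubobject (stabMap (s i) (ι i) T) : C ⥤ A)) :=
        (stab_kernel_isZero s ι π hπ i T).of_iso (kernelSubobjectIso _)
      exact Subobject.le_of_comm (hk.to_ _) (hk.eq_of_src _ _)
    have h0 : IsZero ((⊥ : Subobject T) : C ⥤ A) :=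
      (isZero_zero _).of_iso Subobject.botCoeIsoZero
    rw [hb] at h0
    exact h0.of_iso (asIso (⊤ : Subobject T).arrow).symm
  · intro h W _
    rw [← Subobject.isIso_arrow_iff_eq_top]
    have hW : IsZero ((W : C ⥤ A)) := by
      have : W.arrow = 0 := h.eq_of_tgt _ _
      have : 𝟙 (W : C ⥤ A) = 0 := by
        rw [← cancel_mono W.arrow, this]
        simp
      exact (IsZero.iff_id_eq_zero _).2 this
    exact ⟨0, hW.eq_of_src _ _, h.eq_of_src _ _⟩

theorem degLE_iff_idegLE : ∀ (d : ℕ) (T : C ⥤ A), degLE s ι d T ↔ idegLE s ι d T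
  | 0, T => Iff.rfl
  | d + 1, T => by
    simp only [degLE, idegLE]
    constructor
    · rintro (h | h)
      · exact Or.inl h
      · exact Or.inr fun i => ⟨stab_kernel_isZero s ι π hπ i T,
          (degLE_iff_idegLE d _).1 (h i)⟩
    · rintro (h | h)
      · exact Or.inl h
      · exact Or.inr fun i => (degLE_iff_idegLE d _).2 (h i).2

theorem degLE_iff_sdegLE : ∀ (d : ℕ) (T : C ⥤ A), degLE s ι d T ↔ sdegLE s ι d T
  | 0, T => Iff.rfl
  | d + 1, T => by
    simp only [degLE, sdegLE]
    constructor
    · rintro (h | h)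
      · exact Or.inl h
      · exact Or.inr fun i => ⟨stab_isSplitMono s ι π hπ i T,
          (degLE_iff_sdegLE d _).1 (h i)⟩
    · rintro (h | h)
      · exact Or.inl h
      · exact Or.inr fun i => (degLE_iff_sdegLE d _).2 (h i).2

theorem degLE_iff_wdegLE : ∀ (d : ℕ) (T : C ⥤ A), degLE s ι d T ↔ wdegLE s ι d T
  | 0, T => by
    simp only [degLE, wdegLE]
    exact (kappaEqTop_iff s ι π hπ T).symm
  | d + 1, T => by
    simp only [degLE, wdegLE]
    rw [kappaEqTop_iff s ι π hπ T]
    constructor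
    · rintro (h | h)
      · exact Or.inl h
      · exact Or.inr fun i => (degLE_iff_wdegLE d _).1 (h i)
    · rintro (h | h)
      · exact Or.inl h
      · exact Or.inr fun i => (degLE_iff_wdegLE d _).2 (h i)

end Aux

/-- If each stabilisation map `ιᵢ : 𝟭 C ⟶ sᵢ` admits a left inverse
`πᵢ : sᵢ ⟶ 𝟭 C` with `πᵢ ∘ ιᵢ = id`, then for every functor `T : C ⥤ A`
all four degrees coincide: `wdeg T = deg T = ideg T = sdeg T`. -/
theorem all_degrees_eq_of_retraction {I : Type*} (s : I → C ⥤ C) (ι : ∀ i, 𝟭 C ⟶ s i)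
    (π : ∀ i, s i ⟶ 𝟭 C) (hπ : ∀ i, ι i ≫ π i = 𝟙 (𝟭 C))
    (T : C ⥤ A) :
    wdeg s ι T = deg s ι T ∧ deg s ι T = ideg s ι T ∧ ideg s ι T = sdeg s ι T := by
  have h1 : wdeg s ι T = deg s ι T := by
    unfold wdeg deg
    congr 1
    ext e
    simp only [Set.mem_setOf_eq]
    constructor
    · rintro ⟨d, rfl, h⟩; exact ⟨d, rfl, (degLE_iff_wdegLE s ι π hπ d T).2 h⟩
    · rintro ⟨d, rfl, h⟩; exact ⟨d, rfl, (degLE_iff_wdegLE s ι π hπ d T).1 h⟩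
  have h2 : deg s ι T = ideg s ι T := by
    unfold deg ideg
    congr 1
    ext e
    simp only [Set.mem_setOf_eq]
    constructor
    · rintro ⟨d, rfl, h⟩; exact ⟨d, rfl, (degLE_iff_idegLE s ι π hπ d T).1 h⟩
    · rintro ⟨d, rfl, h⟩; exact ⟨d, rfl, (degLE_iff_idegLE s ι π hπ d T).2 h⟩
  have h3 : ideg s ι T = sdeg s ι T := by
    unfold ideg sdeg
    congr 1
    ext e
    simp only [Set.mem_setOf_eq]
    constructor
    · rintro ⟨d, rfl, h⟩; exact ⟨d, rfl, (degLE_iff_sdegLE s ι π hπ d T).1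
        ((degLE_iff_idegLE s ι π hπ d T).2 h)⟩
    · rintro ⟨d, rfl, h⟩; exact ⟨d, rfl, (degLE_iff_idegLE s ι π hπ d T).1
        ((degLE_iff_sdegLE s ι π hπ d T).2 h)⟩
  exact ⟨h1, h2, h3⟩
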